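/- (Wiener-type strengthening, inequality (16).) Let D ⊆ ℂⁿ be a bounded complete n-circular (Reinhardt) domain and let f(z) = Σ_α c_α z^α be a power series converging at every point of D with |f(z)| < 1 on D. Then for every multi-index α with |α| = α₁+…+α_n ≥ 1, |c_α| ≤ (1 − |c₀|²)/d_α(D), where c₀ is the constant term and d_α(D) = sup_{z ∈ D} |z^α|. -/

import Mathlib

open Complex Metric Finset

lemma mobius_lt (a w : ℂ) (ha : ‖a‖ < 1) (hw : ‖w‖ < 1) :
    ‖w - a‖ < ‖1 - (starRingEnd ℂ) a * w‖ := by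
  have key : (1 - (starRingEnd ℂ) a * w) * (starRingEnd ℂ) (1 - (starRingEnd ℂ) a * w)
      - (w - a) * (starRingEnd ℂ) (w - a)
      = (1 - a * (starRingEnd ℂ) a) * (1 - w * (starRingEnd ℂ) w) := by
    simp only [map_sub, map_mul, map_one, Complex.conj_conj]
    ring
  simp only [Complex.mul_conj] at key
  have key2 : Complex.normSq (1 - (starRingEnd ℂ) a * w) - Complex.normSq (w - a)
      = (1 - Complex.normSq a) * (1 - Complex.normSq w) := by exact_mod_cast key
  have h2 : (‖1 - (starRingEnd ℂ) a * w‖^2 - ‖w - a‖^2 : ℝ)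
      = (1 - ‖a‖^2) * (1 - ‖w‖^2) := by
    simpa only [Complex.sq_norm] using key2
  have hpos : 0 < (1 - ‖a‖^2) * (1 - ‖w‖^2) :=
    mul_pos (by nlinarith [norm_nonneg a]) (by nlinarith [norm_nonneg w])
  have : ‖w - a‖^2 < ‖1 - (starRingEnd ℂ) a * w‖^2 := by linarith
  exact lt_of_pow_lt_pow_left₀ 2 (norm_nonneg _) this

lemma summable_pow_mul (b : ℕ → ℂ) (hb : Summable fun k => ‖b k‖) (μ : ℂ) (hμ : ‖μ‖ ≤ 1) :
    Summable fun k => b k * μ ^ k := by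
  apply Summable.of_norm
  apply hb.of_nonneg_of_le (fun k => norm_nonneg _)
  intro k
  rw [norm_mul, norm_pow]
  calc ‖b k‖ * ‖μ‖ ^ k ≤ ‖b k‖ * 1 :=
        mul_le_mul_of_nonneg_left (pow_le_one₀ (norm_nonneg _) hμ) (norm_nonneg _)
    _ = ‖b k‖ := mul_one _

lemma avg_identity (b : ℕ → ℂ) (hb : Summable fun k => ‖b k‖) (m : ℕ) (hm : 1 ≤ m)
    (lam : ℂ) (hlam : ‖lam‖ ≤ 1) :
    ∑ t ∈ range m, (∑' k, b k * (Complex.exp (2 * Real.pi * Complex.I / m) ^ t * lam) ^ k)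
      = (m : ℂ) * ∑' j, b (j * m) * (lam ^ m) ^ j := by
  set ζ := Complex.exp (2 * Real.pi * Complex.I / m) with hζ
  have hprim : IsPrimitiveRoot ζ m := Complex.isPrimitiveRoot_exp m (by omega)
  have hζnorm : ‖ζ‖ = 1 := by
    rw [hζ, Complex.norm_exp]
    norm_num [Complex.div_re, Complex.mul_I_re]
  have hnorm : ∀ t : ℕ, ‖ζ ^ t * lam‖ ≤ 1 := by
    intro t
    rw [norm_mul, norm_pow, hζnorm, one_pow, one_mul]; exact hlam
  rw [← Summable.tsum_finsetSum (fun t _ => summable_pow_mul b hb _ (hnorm t))]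
  have inner : ∀ k, (∑ t ∈ range m, b k * (ζ ^ t * lam) ^ k)
      = if m ∣ k then (m : ℂ) * (b k * lam ^ k) else 0 := by
    intro k
    have ht : ∀ t, b k * (ζ ^ t * lam) ^ k = (b k * lam ^ k) * (ζ ^ k) ^ t := by
      intro t
      rw [mul_pow, ← pow_mul, ← pow_mul, mul_comm t k]
      ring
    simp only [ht, ← Finset.mul_sum]
    by_cases hdvd : m ∣ k
    · rw [if_pos hdvd, (hprim.pow_eq_one_iff_dvd k).2 hdvd]
      simp [mul_comm]
    · rw [if_neg hdvd]
      have hne : ζ ^ k ≠ 1 := fun h => hdvd ((hprim.pow_eq_one_iff_dvd k).1 h)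
      rw [geom_sum_eq hne]
      have : (ζ ^ k) ^ m = 1 := by
        rw [← pow_mul, mul_comm, pow_mul, hprim.pow_eq_one, one_pow]
      simp [this]
  rw [tsum_congr inner]
  rw [← tsum_mul_left]
  have hinj : Function.Injective (fun j : ℕ => j * m) := fun x y h => by
    simpa [Nat.mul_left_inj (by omega : m ≠ 0)] using h
  rw [← hinj.tsum_eq ?_]
  · apply tsum_congr
    intro j
    rw [if_pos (Dvd.intro_left j rfl), mul_comm j m, pow_mul]
  · intro k hk
    simp only [Function.mem_support] at hk
    obtain ⟨j, rfl⟩ : m ∣ k := by by_contra h; exact hk (if_neg h)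
    exact ⟨j, mul_comm j m⟩

/-- multi-indices of total degree `k` -/
noncomputable def degSet (n k : ℕ) : Finset (Fin n → ℕ) :=
  (Fintype.piFinset fun _ : Fin n => Finset.range (k+1)).filter (fun β => ∑ j, β j = k)

lemma mem_degSet {n k : ℕ} {β : Fin n → ℕ} : β ∈ degSet n k ↔ ∑ j, β j = k := by
  simp only [degSet, Finset.mem_filter, Fintype.mem_piFinset, Finset.mem_range]
  constructor
  · exact fun h => h.2
  · intro h
    refine ⟨fun j => ?_, h⟩
    have : β j ≤ ∑ i, β i := Finset.single_le_sum (fun i _ => Nat.zero_le _) (mem_univ j)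
    omega

lemma regroup {E : Type*} [NormedAddCommGroup E] [CompleteSpace E]
    (n : ℕ) (F : (Fin n → ℕ) → E) (hF : Summable fun β => ‖F β‖) :
    HasSum (fun k => ∑ β ∈ degSet n k, F β) (∑' β, F β) := by
  have hs : Summable F := hF.of_norm
  have h1 := hs.hasSum.tsum_fiberwise (fun β => ∑ j, β j)
  convert h1 using 2 with k
  have hset : ((fun β : Fin n → ℕ => ∑ j, β j) ⁻¹' {k}) = ↑(degSet n k) := by
    ext β
    simp [mem_degSet]
  rw [hset, tsum_subtype ((degSet n k : Set (Fin n → ℕ))) F, tsum_eq_sum (s := degSet n k) ?_]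
  · exact Finset.sum_congr rfl fun β hβ => by simp [Set.indicator_of_mem, hβ]
  · intro β hβ
    simp [Set.indicator_of_notMem, hβ]

lemma nat_extract {N β a' k : ℕ} (hβ : β < N) (ha' : a' < N)
    (h : β + (N-1)*a' = N * k) : β = a' := by
  have hN : 1 ≤ N := by omega
  have h1 : (N-1)*a' + a' = N*a' := by
    rw [Nat.sub_one_mul, Nat.sub_add_cancel (Nat.le_mul_of_pos_left a' (by omega))]
  have h2 : β % N = a' % N := by
    calc β % N = (β + N*a') % N := by rw [Nat.add_mul_mod_self_left]
      _ = ((β + (N-1)*a') + a') % N := by rw [add_assoc, h1]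
      _ = (N*k + a') % N := by rw [h]
      _ = a' % N := by rw [Nat.mul_add_mod]
  rwa [Nat.mod_eq_of_lt hβ, Nat.mod_eq_of_lt ha'] at h2

lemma coord_extract (N : ℕ) (hN : 1 ≤ N) (β a' : ℕ) (hβ : β < N) (ha' : a' < N) :
    ∑ t ∈ range N, (Complex.exp (2 * Real.pi * Complex.I / N)) ^ (t * (β + (N-1)*a'))
      = if β = a' then (N:ℂ) else 0 := by
  set ζ := Complex.exp (2 * Real.pi * Complex.I / N) with hζ
  have hprim : IsPrimitiveRoot ζ N := Complex.isPrimitiveRoot_exp N (by omega)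
  have hterm : ∀ t, ζ ^ (t * (β + (N-1)*a')) = (ζ ^ (β + (N-1)*a')) ^ t := by
    intro t; rw [← pow_mul, mul_comm]
  simp only [hterm]
  by_cases heq : β = a'
  · subst heq
    have h1 : β + (N-1)*β = N*β := by
      rw [Nat.sub_one_mul, Nat.add_comm, Nat.sub_add_cancel (Nat.le_mul_of_pos_left β (by omega))]
    rw [if_pos rfl, h1]
    have : ζ ^ (N*β) = 1 := by rw [pow_mul, hprim.pow_eq_one, one_pow]
    simp [this]
  · rw [if_neg heq]
    have hne : ζ ^ (β + (N-1)*a') ≠ 1 := by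
      intro hone
      obtain ⟨k, hk⟩ := (hprim.pow_eq_one_iff_dvd _).1 hone
      exact heq (nat_extract hβ ha' hk)
    rw [geom_sum_eq hne]
    have : (ζ ^ (β + (N-1)*a')) ^ N = 1 := by
      rw [← pow_mul, mul_comm, pow_mul, hprim.pow_eq_one, one_pow]
    simp [this]

lemma tsum_pow_zero (b : ℕ → ℂ) : ∑' k, b k * (0:ℂ) ^ k = b 0 := by
  rw [tsum_eq_single 0 (fun k hk => by simp [zero_pow hk])]
  simp

lemma wiener1 (b : ℕ → ℂ) (hb : Summable fun k => ‖b k‖)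
    (hg : ∀ lam : ℂ, ‖lam‖ ≤ 1 → ‖∑' k, b k * lam ^ k‖ < 1) (m : ℕ) (hm : 1 ≤ m) :
    ‖b m‖ ≤ 1 - ‖b 0‖ ^ 2 := by
  classical
  set B : ℕ → ℂ := fun j => b (j * m) with hBdef
  have hinj : Function.Injective (fun j : ℕ => j * m) := fun x y h => by
    simpa [Nat.mul_left_inj (by omega : m ≠ 0)] using h
  have hB : Summable fun j => ‖B j‖ := hb.comp_injective hinj
  -- the averaged function is bounded by 1 on the closed disk
  have hG : ∀ μ : ℂ, ‖μ‖ ≤ 1 → ‖∑' j, B j * μ ^ j‖ < 1 := by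
    intro μ hμ
    obtain ⟨lam, hlm⟩ : ∃ lam : ℂ, lam ^ m = μ := by
      rcases eq_or_ne μ 0 with rfl | hμ0
      · exact ⟨0, zero_pow (by omega)⟩
      · refine ⟨Complex.exp (Complex.log μ / m), ?_⟩
        rw [← Complex.exp_nat_mul, mul_div_cancel₀ _ (by exact_mod_cast (by omega : m ≠ 0)),
          Complex.exp_log hμ0]
    have hlam : ‖lam‖ ≤ 1 := by
      have : ‖lam‖ ^ m ≤ 1 := by rw [← norm_pow, hlm]; exact hμ
      exact (pow_le_one_iff_of_nonneg (norm_nonneg _) (by omega)).1 this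
    have key := avg_identity b hb m hm lam hlam
    rw [hlm] at key
    have : (∑' j, B j * μ ^ j)
        = (m : ℂ)⁻¹ * ∑ t ∈ range m,
            (∑' k, b k * (Complex.exp (2 * Real.pi * Complex.I / m) ^ t * lam) ^ k) := by
      rw [key, ← mul_assoc, inv_mul_cancel₀ (by exact_mod_cast (by omega : m ≠ 0)), one_mul]
    rw [this, norm_mul]
    have hζnorm : ‖Complex.exp (2 * Real.pi * Complex.I / m)‖ = 1 := by
      rw [Complex.norm_exp]
      norm_num [Complex.div_re, Complex.mul_I_re]
    have hslt : ‖∑ t ∈ range m,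
        (∑' k, b k * (Complex.exp (2 * Real.pi * Complex.I / m) ^ t * lam) ^ k)‖ < m := by
      calc ‖∑ t ∈ range m, _‖ ≤ ∑ t ∈ range m,
            ‖(∑' k, b k * (Complex.exp (2 * Real.pi * Complex.I / m) ^ t * lam) ^ k)‖ :=
          norm_sum_le _ _
        _ < ∑ _t ∈ range m, 1 := by
            apply Finset.sum_lt_sum_of_nonempty (by simp; omega)
            intro t _
            apply hg
            rw [norm_mul, norm_pow, hζnorm, one_pow, one_mul]
            exact hlam
        _ = m := by simp
    have hmnorm : ‖((m : ℂ))⁻¹‖ = (m : ℝ)⁻¹ := by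
      simp
    rw [hmnorm]
    calc (m:ℝ)⁻¹ * ‖_‖ < (m:ℝ)⁻¹ * m := by
          apply mul_lt_mul_of_pos_left hslt
          simp; omega
      _ = 1 := inv_mul_cancel₀ (by positivity)
  -- power series setup
  have ha : ‖b 0‖ < 1 := by
    have := hg 0 (by simp)
    rwa [tsum_pow_zero] at this
  set a : ℂ := b 0 with hadef
  set p : FormalMultilinearSeries ℂ ℂ ℂ := FormalMultilinearSeries.ofScalars ℂ B with hpdef
  have hrad : 1 ≤ p.radius := by
    apply FormalMultilinearSeries.le_radius_of_summable (r := 1)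
    simpa only [NNReal.coe_one, one_pow, mul_one, hpdef,
      FormalMultilinearSeries.ofScalars_norm] using hB
  set G : ℂ → ℂ := p.sum with hGdef
  have hfp : HasFPowerSeriesOnBall G p 0 p.radius :=
    p.hasFPowerSeriesOnBall (lt_of_lt_of_le one_pos hrad)
  have hsub : Metric.ball (0:ℂ) 1 ⊆ Metric.eball (0:ℂ) p.radius := by
    intro x hx
    rw [Metric.mem_eball, edist_dist]
    refine lt_of_lt_of_le ?_ hrad
    exact ENNReal.ofReal_lt_one.2 (Metric.mem_ball.1 hx)
  have hdiff : DifferentiableOn ℂ G (ball (0:ℂ) 1) := hfp.differentiableOn.mono hsub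
  have hGval : ∀ μ : ℂ, G μ = ∑' j, B j * μ ^ j := by
    intro μ
    rw [hGdef, FormalMultilinearSeries.sum]
    exact tsum_congr fun j => by
      rw [hpdef, FormalMultilinearSeries.ofScalars_apply_eq, smul_eq_mul]
  have hG0 : G 0 = a := by
    rw [hGval, tsum_pow_zero]
    simp [hBdef]
    exact hadef.symm
  have hderivG : deriv G 0 = B 1 := by
    have := hfp.hasFPowerSeriesAt.deriv
    rw [this, hpdef, FormalMultilinearSeries.ofScalars_apply_eq, smul_eq_mul, one_pow, mul_one]
  have hGlt : ∀ μ ∈ ball (0:ℂ) 1, ‖G μ‖ < 1 := by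
    intro μ hμ
    rw [hGval]
    exact hG μ (le_of_lt (mem_ball_zero_iff.1 hμ))
  -- Möbius transform
  set h : ℂ → ℂ := fun μ => (G μ - a) / (1 - (starRingEnd ℂ) a * G μ) with hhdef
  have hden : ∀ μ ∈ ball (0:ℂ) 1, 1 - (starRingEnd ℂ) a * G μ ≠ 0 := by
    intro μ hμ hc
    rw [sub_eq_zero] at hc
    have : ‖(starRingEnd ℂ) a * G μ‖ < 1 := by
      rw [norm_mul, RCLike.norm_conj]
      calc ‖a‖ * ‖G μ‖ ≤ 1 * ‖G μ‖ := mul_le_mul_of_nonneg_right ha.le (norm_nonneg _)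
        _ = ‖G μ‖ := one_mul _
        _ < 1 := hGlt μ hμ
    rw [← hc] at this
    simp at this
  have hdiffh : DifferentiableOn ℂ h (ball (0:ℂ) 1) := by
    apply DifferentiableOn.div
    · exact hdiff.sub (differentiableOn_const a)
    · exact (differentiableOn_const (1:ℂ)).sub (hdiff.const_mul _)
    · exact hden
  have hh0 : h 0 = 0 := by
    rw [hhdef]
    simp only [hG0, sub_self, zero_div]
  have hmaps : Set.MapsTo h (ball (0:ℂ) 1) (ball (h 0) 1) := by
    intro μ hμ
    rw [hh0, mem_ball_zero_iff, hhdef]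
    rw [norm_div, div_lt_one (norm_pos_iff.2 (hden μ hμ))]
    exact mobius_lt a (G μ) ha (hGlt μ hμ)
  have hschwarz : ‖deriv h 0‖ ≤ 1 := by
    have := Complex.norm_deriv_le_div_of_mapsTo_ball hdiffh (hmaps.mono_right ball_subset_closedBall) one_pos
    simpa using this
  -- compute deriv h 0
  have hdG : DifferentiableAt ℂ G 0 :=
    hdiff.differentiableAt (isOpen_ball.mem_nhds (mem_ball_self one_pos))
  have hBall0 : (0:ℂ) ∈ ball (0:ℂ) 1 := mem_ball_self one_pos
  have hconj : (starRingEnd ℂ) a * a = ((‖a‖ ^ 2 : ℝ) : ℂ) := by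
    rw [mul_comm, Complex.mul_conj, Complex.normSq_eq_norm_sq]
  have hderivh : deriv h 0 = B 1 / (1 - ((‖a‖ ^ 2 : ℝ) : ℂ)) := by
    rw [hhdef]
    rw [deriv_fun_div (d := fun y => 1 - (starRingEnd ℂ) a * G y) (hdG.sub_const a) ((differentiableAt_const (1:ℂ)).sub (hdG.const_mul _))
      (hden 0 hBall0)]
    rw [deriv_sub_const, hderivG, hG0, ← hconj]
    have hne0 : (1:ℂ) - (starRingEnd ℂ) a * a ≠ 0 := by
      have := hden 0 hBall0
      rwa [hG0] at this
    field_simp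
    ring
  have hne : (1 : ℝ) - ‖a‖ ^ 2 > 0 := by nlinarith [norm_nonneg a]
  have : ‖deriv h 0‖ = ‖B 1‖ / (1 - ‖a‖ ^ 2) := by
    rw [hderivh, norm_div]
    congr 1
    rw [show ((1:ℂ) - ((‖a‖ ^ 2 : ℝ) : ℂ)) = (((1 - ‖a‖ ^ 2 : ℝ)) : ℂ) by push_cast; ring]
    rw [Complex.norm_real, Real.norm_eq_abs, abs_of_pos hne]
  rw [this, div_le_one hne] at hschwarz
  have hBm : B 1 = b m := by rw [hBdef]; simp
  rwa [hBm] at hschwarz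

/-- Wiener-type strengthening (16): `|c_α| ≤ (1 - |c₀|²) / d_α(D)` for
`|α| ≥ 1`. -/
theorem generalized_cauchy_wiener (n : ℕ) (hn : 1 ≤ n) (D : Set (Fin n → ℂ))
    (hDopen : IsOpen D) (hD0 : (0 : Fin n → ℂ) ∈ D)
    (hDbdd : Bornology.IsBounded D)
    (hDcirc : ∀ z ∈ D, ∀ lam : Fin n → ℂ, (∀ j, ‖lam j‖ ≤ 1) →
      (fun j => lam j * z j) ∈ D)
    (c : (Fin n → ℕ) → ℂ)
    (hconv : ∀ z ∈ D, Summable (fun α : Fin n → ℕ => ‖c α * ∏ j, z j ^ α j‖))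
    (hbound : ∀ z ∈ D, ‖∑' α : Fin n → ℕ, c α * ∏ j, z j ^ α j‖ < 1) :
    ∀ α : Fin n → ℕ, 1 ≤ ∑ j, α j →
      ‖c α‖ ≤ (1 - ‖c 0‖ ^ 2) /
        sSup ((fun z : Fin n → ℂ => ‖∏ j, z j ^ α j‖) '' D) := by
  classical
  intro α hα
  set m := ∑ j, α j with hmdef
  set b : (Fin n → ℂ) → ℕ → ℂ :=
    fun w k => ∑ β ∈ degSet n k, c β * ∏ j, w j ^ β j with hbdef
  -- the constant term
  have hc0 : ‖c 0‖ < 1 := by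
    have h0 := hbound 0 hD0
    rw [tsum_eq_single 0 ?_] at h0
    · simpa using h0
    · intro β hβ
      have hex : ∃ j, β j ≠ 0 := by
        by_contra hcon
        push_neg at hcon
        exact hβ (funext hcon)
      obtain ⟨j, hj⟩ := hex
      apply mul_eq_zero_of_right
      exact Finset.prod_eq_zero (mem_univ j) (by simp [zero_pow hj])
  have hM0 : (0:ℝ) ≤ 1 - ‖c 0‖ ^ 2 := by nlinarith [norm_nonneg (c 0)]
  -- regrouped series at a point of D
  have hree : ∀ w ∈ D, ∀ lam : ℂ, ‖lam‖ ≤ 1 →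
      ∑' k, b w k * lam ^ k = ∑' β : Fin n → ℕ, c β * ∏ j, (lam * w j) ^ β j := by
    intro w hw lam hlam
    have hmem : (fun j => lam * w j) ∈ D :=
      hDcirc w hw (fun _ => lam) (fun _ => hlam)
    have hF : Summable fun β : Fin n → ℕ => ‖c β * ∏ j, (lam * w j) ^ β j‖ := hconv _ hmem
    have hregroup := regroup n (fun β : Fin n → ℕ => c β * ∏ j, (lam * w j) ^ β j) hF
    have hFsum : ∀ k, (∑ β ∈ degSet n k, c β * ∏ j, (lam * w j) ^ β j) = b w k * lam ^ k := by
      intro k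
      rw [hbdef]
      simp only
      rw [Finset.sum_mul]
      apply Finset.sum_congr rfl
      intro β hβ
      rw [mem_degSet] at hβ
      calc c β * ∏ j, (lam * w j) ^ β j
          = c β * ((∏ j, lam ^ β j) * ∏ j, w j ^ β j) := by
            rw [← Finset.prod_mul_distrib]
            simp [mul_pow]
        _ = (c β * ∏ j, w j ^ β j) * lam ^ k := by
            rw [Finset.prod_pow_eq_pow_sum, hβ]
            ring
    rw [← funext hFsum]
    exact hregroup.tsum_eq
  -- summability of the regrouped coefficients
  have hbs : ∀ w ∈ D, Summable fun k => ‖b w k‖ := by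
    intro w hw
    have hF : Summable fun β : Fin n → ℕ => ‖c β * ∏ j, w j ^ β j‖ := hconv _ hw
    have hF' : Summable fun β : Fin n → ℕ => ‖(‖c β * ∏ j, w j ^ β j‖)‖ := by
      simpa using hF
    have hq := (regroup n (fun β : Fin n → ℕ => ‖c β * ∏ j, w j ^ β j‖) hF').summable
    apply hq.of_nonneg_of_le (fun k => norm_nonneg _)
    intro k
    exact norm_sum_le _ _
  -- value at degree 0
  have hb0 : ∀ w : Fin n → ℂ, b w 0 = c 0 := by
    intro w
    have hdeg0 : degSet n 0 = {0} := by
      ext β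
      simp [mem_degSet, Finset.sum_eq_zero_iff, funext_iff]
    rw [hbdef]
    simp [hdeg0]
  -- one-variable Wiener at each point
  have hWm : ∀ w ∈ D, ‖b w m‖ ≤ 1 - ‖c 0‖ ^ 2 := by
    intro w hw
    have := wiener1 (b w) (hbs w hw) ?_ m hα
    · rwa [hb0 w] at this
    · intro lam hlam
      rw [hree w hw lam hlam]
      exact hbound _ (hDcirc w hw (fun _ => lam) (fun _ => hlam))
  -- pointwise inequality via roots of unity extraction
  have hpoint : ∀ z ∈ D, ‖c α‖ * ‖∏ j, z j ^ α j‖ ≤ 1 - ‖c 0‖ ^ 2 := by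
    intro z hz
    set N : ℕ := m + 1 with hNdef
    set ζ : ℂ := Complex.exp (2 * Real.pi * Complex.I / N) with hζdef
    have hζnorm : ‖ζ‖ = 1 := by
      rw [hζdef, Complex.norm_exp]
      norm_num [Complex.div_re, Complex.mul_I_re]
    set w : (Fin n → ℕ) → (Fin n → ℂ) := fun v => fun j => ζ ^ (v j) * z j with hwdef
    have hwD : ∀ v, w v ∈ D := fun v =>
      hDcirc z hz (fun j => ζ ^ (v j)) (fun j => by rw [norm_pow, hζnorm, one_pow])
    set T := Fintype.piFinset (fun _ : Fin n => Finset.range N) with hTdef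
    have hαlt : ∀ j, α j < N := by
      intro j
      have : α j ≤ m := hmdef ▸ Finset.single_le_sum (fun i _ => Nat.zero_le _) (mem_univ j)
      omega
    have hkey : ∑ v ∈ T, (b (w v) m) * ∏ j, ζ ^ (v j * ((N-1) * α j))
        = (N:ℂ)^n * (c α * ∏ j, z j ^ α j) := by
      have step1 : ∀ v, (b (w v) m) * ∏ j, ζ ^ (v j * ((N-1) * α j))
          = ∑ β ∈ degSet n m, (c β * ∏ j, z j ^ β j)
              * ∏ j, ζ ^ (v j * (β j + (N-1) * α j)) := by
        intro v
        rw [hbdef]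
        simp only
        rw [Finset.sum_mul]
        apply Finset.sum_congr rfl
        intro β hβ
        have hprod : ∏ j, (w v j) ^ β j
            = (∏ j, ζ ^ (v j * β j)) * ∏ j, z j ^ β j := by
          rw [← Finset.prod_mul_distrib]
          apply Finset.prod_congr rfl
          intro j _
          rw [hwdef]
          simp only
          rw [mul_pow, ← pow_mul]
        rw [hprod]
        have hcomb : (∏ j, ζ ^ (v j * β j)) * ∏ j, ζ ^ (v j * ((N-1) * α j))
            = ∏ j, ζ ^ (v j * (β j + (N-1) * α j)) := by
          rw [← Finset.prod_mul_distrib]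
          apply Finset.prod_congr rfl
          intro j _
          rw [← pow_add, Nat.mul_add]
        rw [← hcomb]
        ring
      calc ∑ v ∈ T, (b (w v) m) * ∏ j, ζ ^ (v j * ((N-1) * α j))
          = ∑ v ∈ T, ∑ β ∈ degSet n m, (c β * ∏ j, z j ^ β j)
              * ∏ j, ζ ^ (v j * (β j + (N-1) * α j)) := Finset.sum_congr rfl fun v _ => step1 v
        _ = ∑ β ∈ degSet n m, (c β * ∏ j, z j ^ β j)
              * ∑ v ∈ T, ∏ j, ζ ^ (v j * (β j + (N-1) * α j)) := by
            rw [Finset.sum_comm]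
            exact Finset.sum_congr rfl fun β _ => by rw [Finset.mul_sum]
        _ = ∑ β ∈ degSet n m, (c β * ∏ j, z j ^ β j)
              * ∏ j, ∑ t ∈ Finset.range N, ζ ^ (t * (β j + (N-1) * α j)) := by
            apply Finset.sum_congr rfl
            intro β _
            congr 1
            rw [Finset.prod_univ_sum]
        _ = ∑ β ∈ degSet n m, (c β * ∏ j, z j ^ β j)
              * (if β = α then (N:ℂ)^n else 0) := by
            apply Finset.sum_congr rfl
            intro β hβ
            congr 1
            have hβlt : ∀ j, β j < N := by
              intro j
              have h1 : β j ≤ m := (mem_degSet.1 hβ) ▸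
                Finset.single_le_sum (fun i _ => Nat.zero_le _) (mem_univ j)
              omega
            have hco : ∀ j, ∑ t ∈ Finset.range N, ζ ^ (t * (β j + (N-1) * α j))
                = if β j = α j then (N:ℂ) else 0 := fun j =>
              coord_extract N (by omega) (β j) (α j) (hβlt j) (hαlt j)
            rw [Finset.prod_congr rfl (fun j _ => hco j)]
            by_cases heq : β = α
            · subst heq
              simp
            · rw [if_neg heq]
              have : ∃ j, β j ≠ α j := by
                by_contra hcon
                push_neg at hcon
                exact heq (funext hcon)
              obtain ⟨j, hj⟩ := this
              exact Finset.prod_eq_zero (mem_univ j) (if_neg hj)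
        _ = (N:ℂ)^n * (c α * ∏ j, z j ^ α j) := by
            rw [Finset.sum_eq_single α]
            · rw [if_pos rfl]; ring
            · intro β _ hβ
              rw [if_neg hβ, mul_zero]
            · intro hα'
              exact absurd (mem_degSet.2 hmdef.symm) hα'
    -- now take norms
    have hTcard : T.card = N ^ n := by
      rw [hTdef, Fintype.card_piFinset]
      simp
    have hEnorm : ∀ v : Fin n → ℕ, ‖∏ j, ζ ^ (v j * ((N-1) * α j))‖ = 1 := by
      intro v
      rw [norm_prod]
      apply Finset.prod_eq_one
      intro j _
      rw [norm_pow, hζnorm, one_pow]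
    have hbound2 : ‖∑ v ∈ T, (b (w v) m) * ∏ j, ζ ^ (v j * ((N-1) * α j))‖
        ≤ (N:ℝ)^n * (1 - ‖c 0‖ ^ 2) := by
      calc ‖∑ v ∈ T, (b (w v) m) * ∏ j, ζ ^ (v j * ((N-1) * α j))‖
          ≤ ∑ v ∈ T, ‖(b (w v) m) * ∏ j, ζ ^ (v j * ((N-1) * α j))‖ := norm_sum_le _ _
        _ ≤ ∑ _v ∈ T, (1 - ‖c 0‖ ^ 2) := by
            apply Finset.sum_le_sum
            intro v _
            rw [norm_mul, hEnorm v, mul_one]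
            exact hWm (w v) (hwD v)
        _ = (N:ℝ)^n * (1 - ‖c 0‖ ^ 2) := by
            rw [Finset.sum_const, hTcard, nsmul_eq_mul]
            push_cast
            ring
    rw [hkey] at hbound2
    rw [norm_mul, norm_pow, norm_mul] at hbound2
    have hNnorm : ‖(N:ℂ)‖ = (N:ℝ) := by
      simp
    rw [hNnorm] at hbound2
    have hNpos : (0:ℝ) < (N:ℝ)^n := by positivity
    exact le_of_mul_le_mul_left (by linarith [hbound2]) hNpos
  -- conclude using the supremum
  haveI : Nonempty (Fin n) := Fin.pos_iff_nonempty.1 (by omega)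
  set dset := (fun z : Fin n → ℂ => ‖∏ j, z j ^ α j‖) '' D with hdsetdef
  have hne : dset.Nonempty := ⟨_, Set.mem_image_of_mem _ hD0⟩
  obtain ⟨R, hR⟩ := (isBounded_iff_forall_norm_le).1 hDbdd
  have hbdd : BddAbove dset := by
    refine ⟨(max R 1)^m, ?_⟩
    rintro x ⟨z, hz, rfl⟩
    simp only
    rw [norm_prod]
    calc ∏ j, ‖z j ^ α j‖ ≤ ∏ j, (max R 1) ^ α j := by
          apply Finset.prod_le_prod (fun j _ => norm_nonneg _)
          intro j _
          rw [norm_pow]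
          apply pow_le_pow_left₀ (norm_nonneg _)
          exact le_trans (norm_le_pi_norm z j) (le_trans (hR z hz) (le_max_left _ _))
      _ = (max R 1) ^ m := by rw [Finset.prod_pow_eq_pow_sum, hmdef]
  obtain ⟨ε, hε, hball⟩ := Metric.isOpen_iff.1 hDopen 0 hD0
  set z₀ : Fin n → ℂ := fun _ => ((ε/2 : ℝ) : ℂ) with hz₀def
  have hz₀D : z₀ ∈ D := by
    apply hball
    rw [mem_ball_zero_iff, hz₀def, pi_norm_const, Complex.norm_real, Real.norm_eq_abs,
      abs_of_pos (by linarith)]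
    linarith
  have hz₀val : ‖∏ j, z₀ j ^ α j‖ = (ε/2)^m := by
    rw [norm_prod]
    have : ∀ j, ‖z₀ j ^ α j‖ = (ε/2) ^ α j := by
      intro j
      rw [norm_pow, hz₀def]
      simp only
      rw [Complex.norm_real, Real.norm_eq_abs, abs_of_pos (by linarith)]
    rw [Finset.prod_congr rfl (fun j _ => this j), Finset.prod_pow_eq_pow_sum, hmdef]
  have hdpos : 0 < sSup dset :=
    lt_of_lt_of_le (by positivity) (le_csSup hbdd ⟨z₀, hz₀D, hz₀val⟩)
  rcases eq_or_ne (c α) 0 with h0 | h0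
  · rw [h0, norm_zero]
    positivity
  · have hcpos : 0 < ‖c α‖ := norm_pos_iff.2 h0
    have hsup_le : sSup dset ≤ (1 - ‖c 0‖ ^ 2) / ‖c α‖ := by
      apply csSup_le hne
      rintro x ⟨z, hz, rfl⟩
      rw [le_div_iff₀ hcpos]
      rw [mul_comm]
      exact hpoint z hz
    rw [le_div_iff₀ hdpos]
    calc ‖c α‖ * sSup dset ≤ ‖c α‖ * ((1 - ‖c 0‖ ^ 2) / ‖c α‖) :=
          mul_le_mul_of_nonneg_left hsup_le (norm_nonneg _)
      _ = 1 - ‖c 0‖ ^ 2 := mul_div_cancel₀ _ (ne_of_gt hcpos)
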